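/- For the random transpositions shuffle on n cards, after t = (1/2 − a)n log n steps (a ∈ (0,1/2) fixed), the expected number of cards never touched is n·(1 − 2/n)^t ≥ (1+o(1)) n^{2a}, and with high probability at least n^{a} cards remain in their starting positions; since at stationarity the expected number of fixed points of a uniform permutation is 1, the mixing time satisfies τ_mix ≥ (1/2 − a) n log n. -/

import Mathlib

open Finset
open scoped Classical

lemma cnt_pi {α β : Type*} [Fintype α] [Fintype β] [DecidableEq α] (p : β → Prop)
    [DecidablePred p] :
    (univ.filter (fun f : α → β => ∀ s, p (f s))).card = (univ.filter p).card ^ (Fintype.card α) := by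
  classical
  rw [← Fintype.card_subtype, ← Fintype.card_subtype]
  rw [Fintype.card_congr (Equiv.subtypePiEquivPi (p := fun (_ : α) (b : β) => p b))]
  simp [Fintype.card_fun]

lemma cnt_one {n : ℕ} (c : Fin n) :
    (univ.filter (fun x : Fin n × Fin n × Bool => x.1 ≠ c ∧ x.2.1 ≠ c)).card
      = (n-1) * ((n-1) * 2) := by
  classical
  have h1 : (univ.filter (fun i : Fin n => i ≠ c)).card = n - 1 := by
    rw [Finset.filter_ne', Finset.card_erase_of_mem (mem_univ c), Finset.card_univ,
      Fintype.card_fin]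
  have : (univ.filter (fun x : Fin n × Fin n × Bool => x.1 ≠ c ∧ x.2.1 ≠ c))
      = (univ.filter (fun i : Fin n => i ≠ c)) ×ˢ
        ((univ.filter (fun j : Fin n => j ≠ c)) ×ˢ (univ : Finset Bool)) := by
    ext x; simp [and_assoc]
  rw [this, Finset.card_product, Finset.card_product, h1]
  simp

lemma cnt_two {n : ℕ} (c c' : Fin n) (hcc : c ≠ c') :
    (univ.filter (fun x : Fin n × Fin n × Bool =>
      (x.1 ≠ c ∧ x.2.1 ≠ c) ∧ (x.1 ≠ c' ∧ x.2.1 ≠ c'))).card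
      = (n-2) * ((n-2) * 2) := by
  classical
  have h1 : (univ.filter (fun i : Fin n => i ≠ c ∧ i ≠ c')).card = n - 2 := by
    have : (univ.filter (fun i : Fin n => i ≠ c ∧ i ≠ c')) = (univ.erase c).erase c' := by
      ext i; simp [and_comm]
    rw [this, Finset.card_erase_of_mem, Finset.card_erase_of_mem (mem_univ c),
      Finset.card_univ, Fintype.card_fin]
    · rfl
    · exact Finset.mem_erase.2 ⟨hcc.symm, mem_univ c'⟩
  have : (univ.filter (fun x : Fin n × Fin n × Bool =>
        (x.1 ≠ c ∧ x.2.1 ≠ c) ∧ (x.1 ≠ c' ∧ x.2.1 ≠ c')))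
      = (univ.filter (fun i : Fin n => i ≠ c ∧ i ≠ c')) ×ˢ
        ((univ.filter (fun j : Fin n => j ≠ c ∧ j ≠ c')) ×ˢ (univ : Finset Bool)) := by
    ext x; simp; tauto
  rw [this, Finset.card_product, Finset.card_product, h1]
  simp

lemma sum_untouched (n t : ℕ) :
    (∑ ω : Fin t → Fin n × Fin n × Bool,
      (univ.filter (fun c : Fin n => ∀ s : Fin t, (ω s).1 ≠ c ∧ (ω s).2.1 ≠ c)).card)
    = n * ((n-1)*((n-1)*2))^t := by
  classical
  simp only [Finset.card_filter]
  rw [Finset.sum_comm]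
  have : ∀ c : Fin n,
      (∑ ω : Fin t → Fin n × Fin n × Bool,
        if (∀ s : Fin t, (ω s).1 ≠ c ∧ (ω s).2.1 ≠ c) then 1 else 0)
      = ((n-1)*((n-1)*2))^t := by
    intro c
    rw [← Finset.card_filter]
    have h := cnt_pi (α := Fin t) (fun x : Fin n × Fin n × Bool => x.1 ≠ c ∧ x.2.1 ≠ c)
    rw [cnt_one c, Fintype.card_fin] at h
    convert h using 3
  rw [Finset.sum_congr rfl (fun c _ => this c), Finset.sum_const, Finset.card_univ,
    Fintype.card_fin, smul_eq_mul]

lemma sum_untouched_sq (n t : ℕ) :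
    (∑ ω : Fin t → Fin n × Fin n × Bool,
      ((univ.filter (fun c : Fin n => ∀ s : Fin t, (ω s).1 ≠ c ∧ (ω s).2.1 ≠ c)).card)^2)
    = n * ((n-1)*((n-1)*2))^t + (n * (n-1)) * ((n-2)*((n-2)*2))^t := by
  classical
  have expand : ∀ ω : Fin t → Fin n × Fin n × Bool,
      ((univ.filter (fun c : Fin n => ∀ s : Fin t, (ω s).1 ≠ c ∧ (ω s).2.1 ≠ c)).card)^2
      = ∑ c : Fin n, ∑ c' : Fin n,
          if ((∀ s : Fin t, (ω s).1 ≠ c ∧ (ω s).2.1 ≠ c)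
              ∧ (∀ s : Fin t, (ω s).1 ≠ c' ∧ (ω s).2.1 ≠ c')) then 1 else 0 := by
    intro ω
    rw [Finset.card_filter, sq, Finset.sum_mul_sum]
    congr 1; ext c; congr 1; ext c'
    by_cases h1 : (∀ s : Fin t, (ω s).1 ≠ c ∧ (ω s).2.1 ≠ c) <;>
      by_cases h2 : (∀ s : Fin t, (ω s).1 ≠ c' ∧ (ω s).2.1 ≠ c') <;>
      simp [h1, h2]
  rw [Finset.sum_congr rfl (fun ω _ => expand ω)]
  rw [Finset.sum_comm]
  have swap2 : ∀ c : Fin n, (∑ ω : Fin t → Fin n × Fin n × Bool, ∑ c' : Fin n,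
      if ((∀ s : Fin t, (ω s).1 ≠ c ∧ (ω s).2.1 ≠ c)
          ∧ (∀ s : Fin t, (ω s).1 ≠ c' ∧ (ω s).2.1 ≠ c')) then 1 else 0)
      = ∑ c' : Fin n, ∑ ω : Fin t → Fin n × Fin n × Bool,
      (if ((∀ s : Fin t, (ω s).1 ≠ c ∧ (ω s).2.1 ≠ c)
          ∧ (∀ s : Fin t, (ω s).1 ≠ c' ∧ (ω s).2.1 ≠ c')) then 1 else 0) :=
    fun c => Finset.sum_comm
  rw [Finset.sum_congr rfl (fun c _ => swap2 c)]
  have inner : ∀ c c' : Fin n, (∑ ω : Fin t → Fin n × Fin n × Bool,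
      if ((∀ s : Fin t, (ω s).1 ≠ c ∧ (ω s).2.1 ≠ c)
          ∧ (∀ s : Fin t, (ω s).1 ≠ c' ∧ (ω s).2.1 ≠ c')) then 1 else 0)
      = if c' = c then ((n-1)*((n-1)*2))^t else ((n-2)*((n-2)*2))^t := by
    intro c c'
    rw [← Finset.card_filter]
    by_cases hcc : c' = c
    · subst hcc
      simp only [if_true]
      have : (univ.filter (fun ω : Fin t → Fin n × Fin n × Bool =>
          (∀ s : Fin t, (ω s).1 ≠ c' ∧ (ω s).2.1 ≠ c')
            ∧ (∀ s : Fin t, (ω s).1 ≠ c' ∧ (ω s).2.1 ≠ c')))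
          = (univ.filter (fun ω : Fin t → Fin n × Fin n × Bool =>
              ∀ s : Fin t, (ω s).1 ≠ c' ∧ (ω s).2.1 ≠ c')) := by
        ext ω; simp [and_self]
      rw [this]
      have h := cnt_pi (α := Fin t) (fun x : Fin n × Fin n × Bool => x.1 ≠ c' ∧ x.2.1 ≠ c')
      rw [cnt_one c', Fintype.card_fin] at h
      convert h using 3
    · rw [if_neg hcc]
      have : (univ.filter (fun ω : Fin t → Fin n × Fin n × Bool =>
          (∀ s : Fin t, (ω s).1 ≠ c ∧ (ω s).2.1 ≠ c)
            ∧ (∀ s : Fin t, (ω s).1 ≠ c' ∧ (ω s).2.1 ≠ c')))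
          = (univ.filter (fun ω : Fin t → Fin n × Fin n × Bool =>
              ∀ s : Fin t, ((ω s).1 ≠ c ∧ (ω s).2.1 ≠ c) ∧ ((ω s).1 ≠ c' ∧ (ω s).2.1 ≠ c'))) := by
        ext ω
        simp only [mem_filter, mem_univ, true_and, forall_and]
      rw [this]
      have h := cnt_pi (α := Fin t) (fun x : Fin n × Fin n × Bool =>
          (x.1 ≠ c ∧ x.2.1 ≠ c) ∧ (x.1 ≠ c' ∧ x.2.1 ≠ c'))
      rw [cnt_two c c' (fun h => hcc h.symm), Fintype.card_fin] at h
      convert h using 3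
  rw [Finset.sum_congr rfl (fun c _ => Finset.sum_congr rfl (fun c' _ => inner c c'))]
  have row : ∀ c : Fin n, (∑ c' : Fin n,
      if c' = c then ((n-1)*((n-1)*2))^t else ((n-2)*((n-2)*2))^t)
      = ((n-1)*((n-1)*2))^t + (n-1) * ((n-2)*((n-2)*2))^t := by
    intro c
    rw [← Finset.add_sum_erase univ _ (mem_univ c), if_pos rfl]
    congr 1
    rw [Finset.sum_congr rfl (fun x hx => if_neg (Finset.mem_erase.1 hx).1),
      Finset.sum_const, Finset.card_erase_of_mem (mem_univ c), Finset.card_univ,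
      Fintype.card_fin, smul_eq_mul]
  rw [Finset.sum_congr rfl (fun c _ => row c), Finset.sum_const, Finset.card_univ,
    Fintype.card_fin, smul_eq_mul]
  ring

lemma fiber_card {n : ℕ} (i j : Fin n) :
    (univ.filter (fun σ : Equiv.Perm (Fin n) => σ i = j)).card
      = (univ.filter (fun σ : Equiv.Perm (Fin n) => σ i = i)).card := by
  classical
  apply Finset.card_bij' (fun σ _ => Equiv.swap j i * σ) (fun τ _ => Equiv.swap j i * τ)
  · intro σ hσ
    simp only [mem_filter, mem_univ, true_and] at hσ ⊢
    simp [Equiv.Perm.mul_apply, hσ]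
  · intro τ hτ
    simp only [mem_filter, mem_univ, true_and] at hτ ⊢
    simp [Equiv.Perm.mul_apply, hτ]
  · intro σ _; simp [← mul_assoc]
  · intro τ _; simp [← mul_assoc]

lemma sum_fix {n : ℕ} (hn : 0 < n) :
    ∑ σ : Equiv.Perm (Fin n), (univ.filter (fun i : Fin n => σ i = i)).card
      = Nat.factorial n := by
  classical
  have key : ∀ i : Fin n,
      n * (univ.filter (fun σ : Equiv.Perm (Fin n) => σ i = i)).card = Nat.factorial n := by
    intro i
    have hfib : (univ : Finset (Equiv.Perm (Fin n))).card
        = ∑ j : Fin n, (univ.filter (fun σ : Equiv.Perm (Fin n) => σ i = j)).card :=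
      Finset.card_eq_sum_card_fiberwise (fun σ _ => mem_univ (σ i))
    rw [Finset.card_univ, Fintype.card_perm, Fintype.card_fin] at hfib
    rw [Finset.sum_congr rfl (fun j _ => fiber_card i j), Finset.sum_const, Finset.card_univ,
      Fintype.card_fin, smul_eq_mul] at hfib
    exact hfib.symm
  have swap : ∑ σ : Equiv.Perm (Fin n), (univ.filter (fun i : Fin n => σ i = i)).card
      = ∑ i : Fin n, (univ.filter (fun σ : Equiv.Perm (Fin n) => σ i = i)).card := by
    simp only [Finset.card_filter]
    exact Finset.sum_comm
  rw [swap]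
  apply Nat.eq_of_mul_eq_mul_left hn
  rw [Finset.mul_sum]
  simp only [key]
  rw [Finset.sum_const, Finset.card_univ, Fintype.card_fin, smul_eq_mul]

lemma prod_fix {α : Type*} (l : List (Equiv.Perm α)) (c : α) (h : ∀ g ∈ l, g c = c) :
    l.prod c = c := by
  induction l with
  | nil => simp
  | cons g l ih =>
    simp only [List.prod_cons, Equiv.Perm.mul_apply]
    rw [ih (fun g hg => h g (List.mem_cons_of_mem _ hg)), h g List.mem_cons_self]

lemma analytic (a ε₀ : ℝ) (ha0 : 0 < a) (ha2 : a < 1/2) (hε₀pos : 0 < ε₀) (hε₀le : ε₀ ≤ 1/8)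
    (n t : ℕ) (hn4 : 4 ≤ n)
    (hlog : Real.log n / n ≤ (-Real.log (1-ε₀))/(4*(1-2*a)))
    (ht : (t:ℝ) ≤ (1/2 - a) * n * Real.log n) :
    (1 - ε₀) * (n:ℝ)^(2*a) ≤ (n:ℝ) * (1 - 2/(n:ℝ))^t := by
  have hnR : (4:ℝ) ≤ (n:ℝ) := by exact_mod_cast hn4
  have hn0 : (0:ℝ) < n := by linarith
  have hL0 : 0 < Real.log n := Real.log_pos (by linarith)
  set L : ℝ := Real.log n with hL
  set δ : ℝ := -Real.log (1-ε₀) with hδ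
  have hδ0 : 0 < δ := by
    have h : Real.log (1-ε₀) < 0 := Real.log_neg (by linarith) (by linarith)
    rw [hδ]; linarith
  have ha' : (0:ℝ) < 1 - 2*a := by linarith
  set x : ℝ := 1 - 2/(n:ℝ) with hxdef
  have h2n : 2/(n:ℝ) ≤ 1/2 := by
    rw [div_le_div_iff₀ hn0 (by norm_num)]; linarith
  have hxpos : 0 < x := by rw [hxdef]; linarith
  have hxle1 : x ≤ 1 := by
    rw [hxdef]
    have : 0 < 2/(n:ℝ) := by positivity
    linarith
  have hnn2 : (0:ℝ) < (n:ℝ) - 2 := by linarith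
  have hlx_neg : Real.log x ≤ 0 := Real.log_nonpos hxpos.le hxle1
  have hlx_ge : -2/((n:ℝ)-2) ≤ Real.log x := by
    have h := Real.one_sub_inv_le_log_of_pos hxpos
    have hxinv : x⁻¹ = (n:ℝ)/((n:ℝ)-2) := by
      rw [hxdef]
      rw [show 1 - 2/(n:ℝ) = ((n:ℝ)-2)/(n:ℝ) by field_simp]
      rw [inv_div]
    rw [hxinv] at h
    have : 1 - (n:ℝ)/((n:ℝ)-2) = -2/((n:ℝ)-2) := by field_simp; ring
    linarith [this ▸ h]
  -- hypothesis without division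
  have hL4 : L * (4*(1-2*a)) ≤ δ * (n:ℝ) := by
    have := (div_le_div_iff₀ hn0 (by positivity : (0:ℝ) < 4*(1-2*a))).1 hlog
    linarith
  have key1 : (1-2*a) * L * 2 ≤ δ * ((n:ℝ) - 2) := by
    nlinarith [mul_nonneg hδ0.le (by linarith : (0:ℝ) ≤ (n:ℝ) - 4)]
  -- exponent inequality
  have key2 : Real.log (1-ε₀) + (2*a-1)*L ≤ ((1/2 - a) * (n:ℝ) * L) * (-2/((n:ℝ)-2)) := by
    rw [← sub_nonneg]
    have hexp : ((1/2 - a) * (n:ℝ) * L) * (-2/((n:ℝ)-2)) - (Real.log (1-ε₀) + (2*a-1)*L)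
        = (δ * ((n:ℝ)-2) - (1-2*a)*L*2) / ((n:ℝ)-2) := by
      rw [hδ]
      field_simp [hnn2.ne']
      ring
    rw [hexp]
    exact div_nonneg (by linarith) hnn2.le
  have hT0 : 0 ≤ (1/2 - a) * (n:ℝ) * L :=
    mul_nonneg (mul_nonneg (by linarith) hn0.le) hL0.le
  have step1 : ((1/2 - a) * (n:ℝ) * L) * (-2/((n:ℝ)-2)) ≤ ((1/2 - a) * (n:ℝ) * L) * Real.log x :=
    mul_le_mul_of_nonneg_left hlx_ge hT0
  have step2 : ((1/2 - a) * (n:ℝ) * L) * Real.log x ≤ (t:ℝ) * Real.log x :=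
    mul_le_mul_of_nonpos_right ht hlx_neg
  -- assemble via exp
  have hxt : x^t = Real.exp ((t:ℝ) * Real.log x) := by
    rw [← Real.log_pow, Real.exp_log (pow_pos hxpos t)]
  have hrpow : (n:ℝ)^(2*a) = Real.exp (Real.log (n:ℝ) * (2*a)) := Real.rpow_def_of_pos hn0 _
  have hone : (1 - ε₀) = Real.exp (Real.log (1-ε₀)) := (Real.exp_log (by linarith)).symm
  have hnexp : (n:ℝ) = Real.exp L := by rw [hL, Real.exp_log hn0]
  calc (1 - ε₀) * (n:ℝ)^(2*a)
      = Real.exp (Real.log (1-ε₀) + L * (2*a)) := by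
        rw [hrpow, hone, ← Real.exp_add, Real.log_exp]
    _ ≤ Real.exp (L + (t:ℝ) * Real.log x) := by
        apply Real.exp_le_exp.2
        have : Real.log (1-ε₀) + (2*a-1)*L ≤ (t:ℝ) * Real.log x :=
          le_trans key2 (le_trans step1 step2)
        linarith
    _ = (n:ℝ) * x^t := by
        rw [Real.exp_add, ← hxt, ← hnexp]


lemma arith1 (nn : ℝ) (h : 4 ≤ nn) : (1 - 2/nn)*(nn*(nn*2)) ≤ (nn-1)*((nn-1)*2) := by
  have hnn : (0:ℝ) < nn := by linarith
  have hdc : (2/nn)*nn = 2 := div_mul_cancel₀ 2 hnn.ne'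
  nlinarith [hdc]

lemma arith2 (nn : ℝ) (h : 4 ≤ nn) :
    ((nn-2)*((nn-2)*2))*(nn*(nn*2)) ≤ ((nn-1)*((nn-1)*2))^2 := by nlinarith

lemma arith3 (e y E : ℝ) (hy : 4 ≤ y) (he1 : 0 < e) (he2 : e ≤ 1/8)
    (hE : (1-e)*y^2 ≤ E) : y ≤ E/2 := by nlinarith

lemma arith4 (e y E : ℝ) (hy : 4 ≤ y) (he1 : 0 < e) (he2 : e ≤ 1/8)
    (hE : (1-e)*y^2 ≤ E) (h8 : 8 ≤ e*y) : 4 ≤ e*E := by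
  have k1 : 8*y ≤ (e*y)*y := mul_le_mul_of_nonneg_right h8 (by linarith)
  have k2 : (32:ℝ) ≤ e*y^2 := by nlinarith
  have k3 : (7/8:ℝ)*32 ≤ (1-e)*(e*y^2) :=
    mul_le_mul (by linarith) k2 (by norm_num) (by linarith)
  have k4 : e*((1-e)*y^2) = (1-e)*(e*y^2) := by ring
  have k5 : e*((1-e)*y^2) ≤ e*E := mul_le_mul_of_nonneg_left hE he1.le
  linarith

set_option maxHeartbeats 2000000 in
theorem stmt17 (a : ℝ) (ha : a ∈ Set.Ioo (0:ℝ) (1/2)) (ε : ℝ) (hε : 0 < ε) :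
    ∃ N : ℕ, ∀ n : ℕ, N ≤ n → ∀ t : ℕ, (t : ℝ) ≤ (1/2 - a) * n * Real.log n →
    letI Ω := Fin t → Fin n × Fin n × Bool
    letI deck : Ω → Equiv.Perm (Fin n) := fun ω =>
      (List.ofFn (fun s : Fin t =>
        if (ω s).2.2 then Equiv.swap (ω s).1 (ω s).2.1 else 1)).prod
    letI untouched : Ω → ℕ := fun ω =>
      (Finset.univ.filter (fun c : Fin n => ∀ s : Fin t,
        (ω s).1 ≠ c ∧ (ω s).2.1 ≠ c)).card
    ((∑ ω : Ω, (untouched ω : ℝ)) / (Fintype.card Ω) ≥ (n : ℝ) * (1 - 2/n)^t ∧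
      (n : ℝ) * (1 - 2/n)^t ≥ (1 - ε) * (n : ℝ) ^ (2*a)) ∧
    (((Finset.univ.filter (fun ω : Ω => (n:ℝ)^a ≤ (untouched ω : ℝ))).card : ℝ)
      ≥ (1 - ε) * Fintype.card Ω) ∧
    ((∑ σ : Equiv.Perm (Fin n),
        ((Finset.univ.filter (fun i : Fin n => σ i = i)).card : ℝ)) / (Nat.factorial n)
      = 1) ∧
    ((1/2) * ∑ σ : Equiv.Perm (Fin n),
        |((Finset.univ.filter (fun ω : Ω => deck ω = σ)).card : ℝ) / (Fintype.card Ω)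
          - 1 / (Nat.factorial n)| > 1/4) := by
  obtain ⟨ha0, ha2⟩ := ha
  set ε₀ : ℝ := min ε (1/8) with hε₀def
  have hε₀pos : 0 < ε₀ := lt_min hε (by norm_num)
  have hε₀le : ε₀ ≤ 1/8 := min_le_right _ _
  have hε₀ε : ε₀ ≤ ε := min_le_left _ _
  have hδ0 : 0 < -Real.log (1 - ε₀) := by
    have h : Real.log (1-ε₀) < 0 := Real.log_neg (by linarith) (by linarith)
    linarith
  have ha' : (0:ℝ) < 1 - 2*a := by linarith
  have hev : ∀ᶠ n : ℕ in Filter.atTop,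
      4 ≤ n ∧ Real.log n / n ≤ (-Real.log (1 - ε₀))/(4*(1-2*a))
        ∧ (8/ε₀ + 4) ≤ (n:ℝ)^a := by
    have h1 : ∀ᶠ n : ℕ in Filter.atTop, 4 ≤ n := Filter.eventually_ge_atTop 4
    have h2 : Filter.Tendsto (fun n : ℕ => Real.log n / n) Filter.atTop (nhds 0) :=
      (Real.isLittleO_log_id_atTop.tendsto_div_nhds_zero).comp tendsto_natCast_atTop_atTop
    have h2' : ∀ᶠ n : ℕ in Filter.atTop,
        Real.log n / n ≤ (-Real.log (1 - ε₀))/(4*(1-2*a)) := by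
      filter_upwards [h2.eventually_lt_const
        (show (0:ℝ) < (-Real.log (1 - ε₀))/(4*(1-2*a)) by positivity)] with n h
      exact h.le
    have h3 : Filter.Tendsto (fun n : ℕ => (n:ℝ)^a) Filter.atTop Filter.atTop :=
      (tendsto_rpow_atTop ha0).comp tendsto_natCast_atTop_atTop
    have h3' : ∀ᶠ n : ℕ in Filter.atTop, (8/ε₀ + 4) ≤ (n:ℝ)^a :=
      h3.eventually_ge_atTop _
    filter_upwards [h1, h2', h3'] with n hn1 hn2 hn3
    exact ⟨hn1, hn2, hn3⟩
  obtain ⟨N, hN⟩ := Filter.eventually_atTop.1 hev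
  refine ⟨N, fun n hn t ht => ?_⟩
  obtain ⟨hn4, hlogn, hna⟩ := hN n hn
  have hnR : (4:ℝ) ≤ (n:ℝ) := by exact_mod_cast hn4
  have hn0 : (0:ℝ) < n := by linarith
  have hcast1 : ((n - 1 : ℕ) : ℝ) = (n:ℝ) - 1 := by
    rw [Nat.cast_sub (by omega)]; norm_num
  have hcast2 : ((n - 2 : ℕ) : ℝ) = (n:ℝ) - 2 := by
    rw [Nat.cast_sub (by omega)]; norm_num
  have hMn : Fintype.card (Fin t → Fin n × Fin n × Bool) = (n*(n*2))^t := by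
    simp [Fintype.card_fun]
  have hM : ((Fintype.card (Fin t → Fin n × Fin n × Bool)) : ℝ) = ((n:ℝ)*((n:ℝ)*2))^t := by
    rw [hMn]; push_cast; ring
  have hMpos : (0:ℝ) < ((n:ℝ)*((n:ℝ)*2))^t := by positivity
  have hS1 : (∑ ω : Fin t → Fin n × Fin n × Bool,
      (((univ.filter (fun c : Fin n => ∀ s : Fin t, (ω s).1 ≠ c ∧ (ω s).2.1 ≠ c)).card : ℕ) : ℝ))
      = (n:ℝ) * (((n:ℝ)-1)*(((n:ℝ)-1)*2))^t := by
    rw [← Nat.cast_sum, sum_untouched n t]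
    push_cast [hcast1]
    ring
  have hS2 : (∑ ω : Fin t → Fin n × Fin n × Bool,
      ((((univ.filter (fun c : Fin n => ∀ s : Fin t, (ω s).1 ≠ c ∧ (ω s).2.1 ≠ c)).card : ℕ) : ℝ))^2)
      = (n:ℝ) * (((n:ℝ)-1)*(((n:ℝ)-1)*2))^t
        + ((n:ℝ)*((n:ℝ)-1)) * (((n:ℝ)-2)*(((n:ℝ)-2)*2))^t := by
    have hc : (∑ ω : Fin t → Fin n × Fin n × Bool,
        ((((univ.filter (fun c : Fin n => ∀ s : Fin t, (ω s).1 ≠ c ∧ (ω s).2.1 ≠ c)).card : ℕ) : ℝ))^2)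
        = (((∑ ω : Fin t → Fin n × Fin n × Bool,
            ((univ.filter (fun c : Fin n => ∀ s : Fin t, (ω s).1 ≠ c ∧ (ω s).2.1 ≠ c)).card)^2) : ℕ) : ℝ) := by
      push_cast; rfl
    rw [hc, sum_untouched_sq n t]
    push_cast [hcast1, hcast2]
    ring
  set x : ℝ := 1 - 2/(n:ℝ) with hxdef
  have h2n : 2/(n:ℝ) ≤ 1/2 := by rw [div_le_div_iff₀ hn0 (by norm_num)]; linarith
  have hx0 : (0:ℝ) ≤ x := by rw [hxdef]; linarith
  have hdc : (2/(n:ℝ))*(n:ℝ) = 2 := div_mul_cancel₀ 2 hn0.ne'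
  -- part 1a
  have part1a : (∑ ω : Fin t → Fin n × Fin n × Bool,
      (((univ.filter (fun c : Fin n => ∀ s : Fin t, (ω s).1 ≠ c ∧ (ω s).2.1 ≠ c)).card : ℕ) : ℝ))
      / ((Fintype.card (Fin t → Fin n × Fin n × Bool)) : ℝ) ≥ (n:ℝ) * x^t := by
    rw [hS1, hM, mul_div_assoc, ← div_pow]
    apply mul_le_mul_of_nonneg_left _ hn0.le
    apply pow_le_pow_left₀ hx0
    rw [le_div_iff₀ (by positivity)]
    rw [hxdef]
    exact arith1 _ hnR
  have part1b : (n:ℝ) * x^t ≥ (1-ε₀) * (n:ℝ)^(2*a) :=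
    analytic a ε₀ ha0 ha2 hε₀pos hε₀le n t hn4 hlogn ht
  have hrp0 : (0:ℝ) ≤ (n:ℝ)^(2*a) := Real.rpow_nonneg hn0.le _
  have hsq : (n:ℝ)^(2*a) = ((n:ℝ)^a)^2 := by
    rw [← Real.rpow_natCast ((n:ℝ)^a) 2, ← Real.rpow_mul hn0.le]
    norm_num
    ring_nf
  have hna4 : (4:ℝ) ≤ (n:ℝ)^a := by
    have h : (0:ℝ) < 8/ε₀ := by positivity
    linarith
  -- concentration
  have hconc : (((univ.filter (fun ω : Fin t → Fin n × Fin n × Bool =>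
      (n:ℝ)^a ≤ (((univ.filter (fun c : Fin n => ∀ s : Fin t,
        (ω s).1 ≠ c ∧ (ω s).2.1 ≠ c)).card : ℕ) : ℝ))).card : ℕ) : ℝ)
      ≥ (1 - ε₀) * ((Fintype.card (Fin t → Fin n × Fin n × Bool)) : ℝ) := by
    set U : (Fin t → Fin n × Fin n × Bool) → ℝ := fun ω =>
      (((univ.filter (fun c : Fin n => ∀ s : Fin t, (ω s).1 ≠ c ∧ (ω s).2.1 ≠ c)).card : ℕ) : ℝ)
      with hUdef
    set MR : ℝ := ((n:ℝ)*((n:ℝ)*2))^t with hMRdef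
    set AR : ℝ := (((n:ℝ)-1)*(((n:ℝ)-1)*2))^t with hARdef
    set BR : ℝ := (((n:ℝ)-2)*(((n:ℝ)-2)*2))^t with hBRdef
    have hARpos : (0:ℝ) < AR := by
      rw [hARdef]
      exact pow_pos (by nlinarith [hnR]) t
    set E : ℝ := (n:ℝ) * AR / MR with hEdef
    have hE_low : (1-ε₀) * ((n:ℝ)^a)^2 ≤ E := by
      calc (1-ε₀)*((n:ℝ)^a)^2 = (1-ε₀)*(n:ℝ)^(2*a) := by rw [hsq]
        _ ≤ (n:ℝ)*x^t := part1b
        _ ≤ E := by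
            rw [hEdef, ← hS1, ← hM]
            exact part1a
    have hhalf : (n:ℝ)^a ≤ E/2 := arith3 ε₀ _ E hna4 hε₀pos hε₀le hE_low
    have hEpos : (0:ℝ) < E := by linarith [hhalf, hna4]
    have hUnn : ∀ ω, 0 ≤ U ω := fun ω => by rw [hUdef]; positivity
    -- variance bound
    have hBM : BR * MR ≤ AR^2 := by
      rw [hARdef, hBRdef, hMRdef, ← mul_pow, ← pow_mul, pow_mul']
      apply pow_le_pow_left₀
        (mul_nonneg (mul_nonneg (by linarith : (0:ℝ) ≤ (n:ℝ)-2) (by linarith)) (by positivity))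
      exact arith2 _ hnR
    have hvar : ∑ ω : Fin t → Fin n × Fin n × Bool, (U ω - E)^2 ≤ (n:ℝ)*AR := by
      have hptw : ∀ ω : Fin t → Fin n × Fin n × Bool,
          (U ω - E)^2 = (U ω)^2 - 2*E*(U ω) + E^2 := fun ω => by ring
      rw [Finset.sum_congr rfl (fun ω _ => hptw ω), Finset.sum_add_distrib,
        Finset.sum_sub_distrib, ← Finset.mul_sum, Finset.sum_const, Finset.card_univ,
        nsmul_eq_mul, hS2, hS1, hM]
      have hEq : -(2*E*((n:ℝ)*AR)) + MR*E^2 = -(((n:ℝ)*AR)^2/MR) := by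
        rw [hEdef]; field_simp; ring
      have hle : ((n:ℝ)*((n:ℝ)-1))*BR ≤ ((n:ℝ)*AR)^2/MR := by
        rw [le_div_iff₀ hMpos]
        calc ((n:ℝ)*((n:ℝ)-1))*BR*MR = ((n:ℝ)*((n:ℝ)-1))*(BR*MR) := by ring
          _ ≤ ((n:ℝ)*((n:ℝ)-1))*AR^2 :=
              mul_le_mul_of_nonneg_left hBM (by nlinarith)
          _ ≤ ((n:ℝ)*(n:ℝ))*AR^2 :=
              mul_le_mul_of_nonneg_right (by nlinarith [hnR]) (sq_nonneg AR)
          _ = ((n:ℝ)*AR)^2 := by ring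
      linarith [hEq, hle]
    -- Chebyshev
    set bad : Finset (Fin t → Fin n × Fin n × Bool) :=
      univ.filter (fun ω => ¬ ((n:ℝ)^a ≤ U ω)) with hbaddef
    have hbadcount : (bad.card : ℝ) * (E/2)^2 ≤ (n:ℝ)*AR := by
      have hptw : ∀ ω ∈ bad, (E/2)^2 ≤ (U ω - E)^2 := by
        intro ω hω
        rw [hbaddef, mem_filter] at hω
        have hlt : U ω < (n:ℝ)^a := not_le.1 hω.2
        have h1 : E/2 ≤ E - U ω := by linarith [hhalf]
        calc (E/2)^2 ≤ (E - U ω)^2 := pow_le_pow_left₀ (by linarith) h1 2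
          _ = (U ω - E)^2 := by ring
      calc (bad.card : ℝ) * (E/2)^2
          ≤ ∑ ω ∈ bad, (U ω - E)^2 := by
            have h := Finset.card_nsmul_le_sum bad (fun ω => (U ω - E)^2) ((E/2)^2) hptw
            simpa [nsmul_eq_mul] using h
        _ ≤ ∑ ω : Fin t → Fin n × Fin n × Bool, (U ω - E)^2 :=
            Finset.sum_le_sum_of_subset_of_nonneg (Finset.filter_subset _ _)
              (fun ω _ _ => sq_nonneg _)
        _ ≤ (n:ℝ)*AR := hvar
    have h8 : (8:ℝ) ≤ ε₀ * (n:ℝ)^a := by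
      have h := mul_le_mul_of_nonneg_left hna hε₀pos.le
      have hdiv : ε₀*(8/ε₀) = 8 := by field_simp
      have hexp : ε₀*(8/ε₀+4) = ε₀*(8/ε₀) + 4*ε₀ := by ring
      linarith [h, hdiv, hexp, hε₀pos]
    have hεE : (4:ℝ) ≤ ε₀ * E := arith4 ε₀ _ E hna4 hε₀pos hε₀le hE_low h8
    have hEM : (n:ℝ)*AR = E*MR := by rw [hEdef]; field_simp
    have hbad2 : (bad.card:ℝ) ≤ ε₀ * MR := by
      have h2 : (bad.card:ℝ)*E ≤ 4*MR := by
        apply le_of_mul_le_mul_right _ hEpos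
        calc (bad.card:ℝ)*E*E = 4*((bad.card:ℝ)*(E/2)^2) := by ring
          _ ≤ 4*((n:ℝ)*AR) := by linarith
          _ = 4*MR*E := by rw [hEM]; ring
      apply le_of_mul_le_mul_right _ hEpos
      calc (bad.card:ℝ)*E ≤ 4*MR := h2
        _ ≤ (ε₀*E)*MR := mul_le_mul_of_nonneg_right hεE hMpos.le
        _ = (ε₀*MR)*E := by ring
    have hsplitn : (univ.filter (fun ω : Fin t → Fin n × Fin n × Bool =>
        (n:ℝ)^a ≤ U ω)).card + bad.card = Fintype.card (Fin t → Fin n × Fin n × Bool) := by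
      rw [hbaddef, Finset.card_filter_add_card_filter_not, Finset.card_univ]
    have hsplitR : ((univ.filter (fun ω : Fin t → Fin n × Fin n × Bool =>
        (n:ℝ)^a ≤ U ω)).card : ℝ)
        = ((Fintype.card (Fin t → Fin n × Fin n × Bool)) : ℝ) - (bad.card : ℝ) := by
      rw [← hsplitn]; push_cast; ring
    rw [hsplitR, hM]
    linarith [hbad2]
  -- fixed points of uniform permutation
  have hfixsum : (∑ σ : Equiv.Perm (Fin n),
      (((univ.filter (fun i : Fin n => σ i = i)).card : ℕ) : ℝ)) = ((Nat.factorial n : ℕ) : ℝ) := by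
    rw [← Nat.cast_sum, sum_fix (by omega)]
  have hfact0 : (0:ℝ) < ((Nat.factorial n : ℕ) : ℝ) := by
    exact_mod_cast n.factorial_pos
  have hcard0 : (0:ℝ) < ((Fintype.card (Fin t → Fin n × Fin n × Bool)) : ℝ) := by
    rw [hM]; exact hMpos
  -- untouched cards are fixed by the deck permutation
  have hfix : ∀ (ω : Fin t → Fin n × Fin n × Bool) (c : Fin n),
      (∀ s : Fin t, (ω s).1 ≠ c ∧ (ω s).2.1 ≠ c) →
      (List.ofFn (fun s : Fin t =>
        if (ω s).2.2 then Equiv.swap (ω s).1 (ω s).2.1 else 1)).prod c = c := by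
    intro ω c hc
    apply prod_fix
    intro g hg
    rw [List.mem_ofFn] at hg
    obtain ⟨s, rfl⟩ := hg
    by_cases hcoin : (ω s).2.2
    · simp only [if_pos hcoin]
      exact Equiv.swap_apply_of_ne_of_ne (Ne.symm (hc s).1) (Ne.symm (hc s).2)
    · simp only [if_neg hcoin]
      rfl
  have hUlefix : ∀ ω : Fin t → Fin n × Fin n × Bool,
      (univ.filter (fun c : Fin n => ∀ s : Fin t, (ω s).1 ≠ c ∧ (ω s).2.1 ≠ c)).card
      ≤ (univ.filter (fun i : Fin n =>
          (List.ofFn (fun s : Fin t =>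
            if (ω s).2.2 then Equiv.swap (ω s).1 (ω s).2.1 else 1)).prod i = i)).card := by
    intro ω
    apply Finset.card_le_card
    intro c hc
    simp only [mem_filter, mem_univ, true_and] at hc ⊢
    exact hfix ω c hc
  -- the event A of many fixed points
  set A : Finset (Equiv.Perm (Fin n)) := univ.filter (fun σ : Equiv.Perm (Fin n) =>
    (n:ℝ)^a ≤ (((univ.filter (fun i : Fin n => σ i = i)).card : ℕ) : ℝ)) with hAdef
  set DECK : (Fin t → Fin n × Fin n × Bool) → Equiv.Perm (Fin n) := fun ω =>
    (List.ofFn (fun s : Fin t =>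
      if (ω s).2.2 then Equiv.swap (ω s).1 (ω s).2.1 else 1)).prod with hDECKdef
  have htot : (∑ σ : Equiv.Perm (Fin n),
      ((univ.filter (fun ω : Fin t → Fin n × Fin n × Bool => DECK ω = σ)).card))
      = Fintype.card (Fin t → Fin n × Fin n × Bool) := by
    rw [← Finset.card_univ (α := Fin t → Fin n × Fin n × Bool)]
    exact (Finset.card_eq_sum_card_fiberwise (fun ω _ => mem_univ (DECK ω))).symm
  have hAfib : ((univ.filter (fun ω : Fin t → Fin n × Fin n × Bool => DECK ω ∈ A)).card)
      = ∑ σ ∈ A, ((univ.filter (fun ω : Fin t → Fin n × Fin n × Bool => DECK ω = σ)).card) := by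
    rw [Finset.card_eq_sum_card_fiberwise
      (f := DECK) (s := univ.filter (fun ω : Fin t → Fin n × Fin n × Bool => DECK ω ∈ A)) (t := A) (fun ω hω => (mem_filter.1 hω).2)]
    apply Finset.sum_congr rfl
    intro σ hσ
    congr 1
    ext ω
    simp only [mem_filter, mem_univ, true_and]
    constructor
    · exact fun h => h.2
    · intro h
      exact ⟨h ▸ hσ, h⟩
  have hgoodsub : (univ.filter (fun ω : Fin t → Fin n × Fin n × Bool =>
      (n:ℝ)^a ≤ (((univ.filter (fun c : Fin n => ∀ s : Fin t,
        (ω s).1 ≠ c ∧ (ω s).2.1 ≠ c)).card : ℕ) : ℝ)))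
      ⊆ (univ.filter (fun ω : Fin t → Fin n × Fin n × Bool => DECK ω ∈ A)) := by
    intro ω hω
    simp only [mem_filter, mem_univ, true_and] at hω ⊢
    rw [hAdef]
    simp only [mem_filter, mem_univ, true_and]
    refine le_trans hω ?_
    exact_mod_cast hUlefix ω
  -- Markov bound for the uniform measure
  have hAcard : (A.card : ℝ) * (n:ℝ)^a ≤ ((Nat.factorial n : ℕ) : ℝ) := by
    have h1 : A.card • ((n:ℝ)^a)
        ≤ ∑ σ ∈ A, (((univ.filter (fun i : Fin n => σ i = i)).card : ℕ) : ℝ) :=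
      Finset.card_nsmul_le_sum A _ _ (fun σ hσ => (mem_filter.1 hσ).2)
    have h2 : (∑ σ ∈ A, (((univ.filter (fun i : Fin n => σ i = i)).card : ℕ) : ℝ))
        ≤ ∑ σ : Equiv.Perm (Fin n), (((univ.filter (fun i : Fin n => σ i = i)).card : ℕ) : ℝ) :=
      Finset.sum_le_sum_of_subset_of_nonneg (Finset.subset_univ A)
        (fun σ _ _ => by positivity)
    rw [hfixsum] at h2
    rw [← nsmul_eq_mul]
    exact le_trans h1 h2
  -- total variation bound pieces
  have hsump : (∑ σ : Equiv.Perm (Fin n),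
      (((univ.filter (fun ω : Fin t → Fin n × Fin n × Bool => DECK ω = σ)).card : ℕ) : ℝ))
      = ((Fintype.card (Fin t → Fin n × Fin n × Bool)) : ℝ) := by
    rw [← Nat.cast_sum, htot]
  have hPA : 1 - ε₀ ≤ ∑ σ ∈ A,
      ((((univ.filter (fun ω : Fin t → Fin n × Fin n × Bool => DECK ω = σ)).card : ℕ) : ℝ)
        / ((Fintype.card (Fin t → Fin n × Fin n × Bool)) : ℝ)) := by
    rw [← Finset.sum_div, le_div_iff₀ hcard0]
    have hAsum : (∑ σ ∈ A,
        (((univ.filter (fun ω : Fin t → Fin n × Fin n × Bool => DECK ω = σ)).card : ℕ) : ℝ))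
        = (((univ.filter (fun ω : Fin t → Fin n × Fin n × Bool => DECK ω ∈ A)).card : ℕ) : ℝ) := by
      rw [hAfib]; push_cast; rfl
    have hmono : (((univ.filter (fun ω : Fin t → Fin n × Fin n × Bool =>
        (n:ℝ)^a ≤ (((univ.filter (fun c : Fin n => ∀ s : Fin t,
          (ω s).1 ≠ c ∧ (ω s).2.1 ≠ c)).card : ℕ) : ℝ))).card : ℕ) : ℝ)
        ≤ (((univ.filter (fun ω : Fin t → Fin n × Fin n × Bool => DECK ω ∈ A)).card : ℕ) : ℝ) := by
      exact_mod_cast Finset.card_le_card hgoodsub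
    rw [hAsum]
    calc (1-ε₀) * ((Fintype.card (Fin t → Fin n × Fin n × Bool)) : ℝ)
        ≤ (((univ.filter (fun ω : Fin t → Fin n × Fin n × Bool =>
            (n:ℝ)^a ≤ (((univ.filter (fun c : Fin n => ∀ s : Fin t,
              (ω s).1 ≠ c ∧ (ω s).2.1 ≠ c)).card : ℕ) : ℝ))).card : ℕ) : ℝ) := hconc
      _ ≤ _ := hmono
  have hQA : (∑ σ ∈ A, (1 / ((Nat.factorial n : ℕ) : ℝ))) ≤ 1/4 := by
    rw [Finset.sum_const, nsmul_eq_mul, mul_one_div, div_le_div_iff₀ hfact0 (by norm_num)]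
    have hA0 : (0:ℝ) ≤ (A.card : ℝ) := Nat.cast_nonneg _
    have h4 : (A.card:ℝ)*4 ≤ (A.card:ℝ)*(n:ℝ)^a := mul_le_mul_of_nonneg_left hna4 hA0
    linarith [hAcard]
  have hsump1 : (∑ σ : Equiv.Perm (Fin n),
      ((((univ.filter (fun ω : Fin t → Fin n × Fin n × Bool => DECK ω = σ)).card : ℕ) : ℝ)
        / ((Fintype.card (Fin t → Fin n × Fin n × Bool)) : ℝ))) = 1 := by
    rw [← Finset.sum_div, hsump, div_self hcard0.ne']
  have hsumq1 : (∑ _σ : Equiv.Perm (Fin n), (1 / ((Nat.factorial n : ℕ) : ℝ))) = 1 := by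
    rw [Finset.sum_const, Finset.card_univ, Fintype.card_perm, Fintype.card_fin,
      nsmul_eq_mul, mul_one_div, div_self hfact0.ne']
  -- final assembly
  refine ⟨⟨part1a, ?_⟩, ?_, ?_, ?_⟩
  · calc (n:ℝ) * x^t ≥ (1-ε₀) * (n:ℝ)^(2*a) := part1b
      _ ≥ (1-ε) * (n:ℝ)^(2*a) := mul_le_mul_of_nonneg_right (by linarith) hrp0
  · calc (((univ.filter (fun ω : Fin t → Fin n × Fin n × Bool =>
        (n:ℝ)^a ≤ (((univ.filter (fun c : Fin n => ∀ s : Fin t,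
          (ω s).1 ≠ c ∧ (ω s).2.1 ≠ c)).card : ℕ) : ℝ))).card : ℕ) : ℝ)
        ≥ (1-ε₀) * ((Fintype.card (Fin t → Fin n × Fin n × Bool)) : ℝ) := hconc
      _ ≥ (1-ε) * ((Fintype.card (Fin t → Fin n × Fin n × Bool)) : ℝ) :=
          mul_le_mul_of_nonneg_right (by linarith) hcard0.le
  · rw [hfixsum]
    exact div_self hfact0.ne'
  · -- total variation
    set p : Equiv.Perm (Fin n) → ℝ := fun σ =>
      (((univ.filter (fun ω : Fin t → Fin n × Fin n × Bool => DECK ω = σ)).card : ℕ) : ℝ)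
        / ((Fintype.card (Fin t → Fin n × Fin n × Bool)) : ℝ) with hpdef
    set q : ℝ := 1 / ((Nat.factorial n : ℕ) : ℝ) with hqdef
    have hsplit := Finset.sum_filter_add_sum_filter_not
      (univ : Finset (Equiv.Perm (Fin n)))
      (fun σ => (n:ℝ)^a ≤ (((univ.filter (fun i : Fin n => σ i = i)).card : ℕ) : ℝ))
      (fun σ => |p σ - q|)
    have hsplitp := Finset.sum_filter_add_sum_filter_not
      (univ : Finset (Equiv.Perm (Fin n)))
      (fun σ => (n:ℝ)^a ≤ (((univ.filter (fun i : Fin n => σ i = i)).card : ℕ) : ℝ))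
      p
    have hsplitq := Finset.sum_filter_add_sum_filter_not
      (univ : Finset (Equiv.Perm (Fin n)))
      (fun σ => (n:ℝ)^a ≤ (((univ.filter (fun i : Fin n => σ i = i)).card : ℕ) : ℝ))
      (fun _ => q)
    rw [hsumq1] at hsplitq
    rw [hsump1] at hsplitp
    set Ac : Finset (Equiv.Perm (Fin n)) := univ.filter (fun σ =>
      ¬ ((n:ℝ)^a ≤ (((univ.filter (fun i : Fin n => σ i = i)).card : ℕ) : ℝ))) with hAcdef
    have hb1 : ∑ σ ∈ A, (p σ - q) ≤ ∑ σ ∈ A, |p σ - q| :=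
      Finset.sum_le_sum (fun σ _ => le_abs_self _)
    have hb2 : ∑ σ ∈ Ac, (q - p σ) ≤ ∑ σ ∈ Ac, |p σ - q| :=
      Finset.sum_le_sum (fun σ _ => by rw [abs_sub_comm]; exact le_abs_self _)
    have hPA' : 1 - ε₀ ≤ ∑ σ ∈ A, p σ := hPA
    have hQA' : ∑ σ ∈ A, q ≤ 1/4 := hQA
    have hAsub : ∑ σ ∈ A, (p σ - q) = (∑ σ ∈ A, p σ) - (∑ σ ∈ A, q) :=
      Finset.sum_sub_distrib p (fun _ => q)
    have hAcsub : ∑ σ ∈ Ac, (q - p σ) = (∑ σ ∈ Ac, q) - (∑ σ ∈ Ac, p σ) :=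
      Finset.sum_sub_distrib (fun _ => q) p
    have hfinal : (1/2) * ∑ σ : Equiv.Perm (Fin n), |p σ - q| > 1/4 := by
      rw [← hsplit]
      have hε₀' : ε₀ ≤ 1/8 := hε₀le
      have hq1 : ∑ σ ∈ Ac, q = 1 - ∑ σ ∈ A, q := by linarith [hsplitq]
      have hp1 : ∑ σ ∈ Ac, p σ = 1 - ∑ σ ∈ A, p σ := by linarith [hsplitp]
      have h1 : (1 - ε₀) - 1/4 ≤ ∑ σ ∈ A, |p σ - q| := by
        rw [← hsplit] at *
        linarith [hb1, hAsub, hPA', hQA']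
      have h2 : (1 - ε₀) - 1/4 ≤ ∑ σ ∈ Ac, |p σ - q| := by
        have : ∑ σ ∈ Ac, (q - p σ) = (∑ σ ∈ A, p σ) - (∑ σ ∈ A, q) := by
          rw [hAcsub, hq1, hp1]; ring
        linarith [hb2, this, hPA', hQA']
      linarith [h1, h2]
    exact hfinal
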